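/- Let α : Fin 4 → ZMod 3 with α(i) ≠ 0 for some i, let w : Fin 8 → ZMod 3, and let a, b ∈ ZMod 3. In the polynomial ring (ZMod 3)[X], set P = (∏_{i : Fin 4} (1 − α(i)²·X²)) · (∏_{k : Fin 8} (1 − w(k)²·X²)) and Q = ∏_{0 ≤ i < j ≤ 3} (1 − 2·(α(i)² + α(j)²)·X² + (α(i)² − α(j)²)²·X⁴). If P = 1 + a·X^18 and Q = 1 + b·X^18, then P^8 · Q = 1 − X^162. -/

import Mathlib

open Polynomial

private lemma zmod3_sq_eq_one : ∀ x : ZMod 3, x ≠ 0 → x ^ 2 = 1 := by decide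

private def cnt (x : ZMod 3) : ℕ := if x = 0 then 0 else 1

private def g (u v : ZMod 3) : ℕ :=
  if u = 0 then (if v = 0 then 0 else 2) else (if v = 0 then 2 else 1)

private lemma factor1 (x : ZMod 3) :
    (1 - C x ^ 2 * X ^ 2 : (ZMod 3)[X]) = (1 - X ^ 2) ^ (cnt x) := by
  rcases eq_or_ne x 0 with h | h
  · simp [h, cnt]
  · rw [← C_pow, zmod3_sq_eq_one x h]
    simp [cnt, h]

private lemma factor2 (u v : ZMod 3) :
    (1 - C (2 * (u ^ 2 + v ^ 2)) * X ^ 2 + C ((u ^ 2 - v ^ 2) ^ 2) * X ^ 4 : (ZMod 3)[X])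
      = (1 - X ^ 2) ^ (g u v) := by
  rcases eq_or_ne u 0 with hu | hu <;> rcases eq_or_ne v 0 with hv | hv
  · simp [g, hu, hv]
  · rw [zmod3_sq_eq_one v hv]
    simp only [g, hu, hv, if_true, if_false, hu]
    have h1 : (2 * ((0:ZMod 3) ^ 2 + 1)) = 2 := by decide
    have h2 : (((0:ZMod 3) ^ 2 - 1) ^ 2) = 1 := by decide
    rw [h1, h2]
    have hC2 : (C (2 : ZMod 3) : (ZMod 3)[X]) = 2 := by
      simp [map_ofNat]
    rw [hC2, C_1]
    ring
  · rw [zmod3_sq_eq_one u hu]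
    simp only [g, hu, hv, if_true, if_false]
    have h1 : (2 * ((1:ZMod 3) + (0:ZMod 3) ^ 2)) = 2 := by decide
    have h2 : (((1:ZMod 3) - (0:ZMod 3) ^ 2) ^ 2) = 1 := by decide
    rw [h1, h2]
    have hC2 : (C (2 : ZMod 3) : (ZMod 3)[X]) = 2 := by
      simp [map_ofNat]
    rw [hC2, C_1]
    ring
  · rw [zmod3_sq_eq_one u hu, zmod3_sq_eq_one v hv]
    simp only [g, hu, hv, if_false]
    have h1 : (2 * ((1:ZMod 3) + 1)) = 1 := by decide
    have h2 : (((1:ZMod 3) - 1) ^ 2) = 0 := by decide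
    rw [h1, h2, C_1, C_0]
    ring

private lemma g_pos_left (u v : ZMod 3) (h : u ≠ 0) : 1 ≤ g u v := by
  simp only [g, h, if_false]
  split <;> norm_num

private lemma g_pos_right (u v : ZMod 3) (h : v ≠ 0) : 1 ≤ g u v := by
  simp only [g, h, if_false]
  split <;> norm_num

private lemma deg_base : (1 - X ^ 2 : (ZMod 3)[X]).natDegree = 2 := by
  have : (1 - X ^ 2 : (ZMod 3)[X]) = -(X ^ 2 - C 1) := by rw [C_1]; ring
  rw [this, natDegree_neg, natDegree_X_pow_sub_C]

private lemma exponent_eq_nine (t : ℕ) (ht : 1 ≤ t) (c : ZMod 3)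
    (h : (1 - X ^ 2 : (ZMod 3)[X]) ^ t = 1 + C c * X ^ 18) : t = 9 := by
  rcases eq_or_ne c 0 with hc | hc
  · rw [hc] at h
    simp only [map_zero, zero_mul, add_zero] at h
    have := congrArg natDegree h
    rw [natDegree_pow, deg_base, natDegree_one] at this
    omega
  · have := congrArg natDegree h
    rw [natDegree_pow, deg_base, add_comm, ← C_1, natDegree_add_C,
      natDegree_C_mul_X_pow _ _ hc] at this
    omega

private lemma pow_eighty_one :
    (1 - X ^ 2 : (ZMod 3)[X]) ^ 81 = 1 - X ^ 162 := by
  have h : (1 + -(X ^ 2) : (ZMod 3)[X]) ^ 3 ^ 4 = 1 ^ 3 ^ 4 + (-(X ^ 2)) ^ 3 ^ 4 :=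
    add_pow_char_pow ..
  have h81 : (3 : ℕ) ^ 4 = 81 := by norm_num
  rw [h81] at h
  rw [sub_eq_add_neg, h, one_pow]
  have : (-(X ^ 2) : (ZMod 3)[X]) ^ 81 = -((X ^ 2) ^ 81) := Odd.neg_pow ⟨40, rfl⟩ _
  rw [this, ← pow_mul, ← sub_eq_add_neg]

theorem c162_rho8_p3 (α : Fin 4 → ZMod 3) (hα : ∃ i, α i ≠ 0)
    (w : Fin 8 → ZMod 3) (a b : ZMod 3)
    (hP : (∏ i : Fin 4, (1 - C (α i) ^ 2 * X ^ 2))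
            * (∏ k : Fin 8, (1 - C (w k) ^ 2 * X ^ 2))
          = 1 + C a * X ^ 18)
    (hQ : (∏ p ∈ Finset.univ.filter (fun p : Fin 4 × Fin 4 => p.1 < p.2),
            (1 - C (2 * ((α p.1) ^ 2 + (α p.2) ^ 2)) * X ^ 2
              + C (((α p.1) ^ 2 - (α p.2) ^ 2) ^ 2) * X ^ 4))
          = 1 + C b * X ^ 18) :
    ((∏ i : Fin 4, (1 - C (α i) ^ 2 * X ^ 2))
        * (∏ k : Fin 8, (1 - C (w k) ^ 2 * X ^ 2))) ^ 8
      * (∏ p ∈ Finset.univ.filter (fun p : Fin 4 × Fin 4 => p.1 < p.2),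
          (1 - C (2 * ((α p.1) ^ 2 + (α p.2) ^ 2)) * X ^ 2
            + C (((α p.1) ^ 2 - (α p.2) ^ 2) ^ 2) * X ^ 4))
      = 1 - X ^ 162 := by
  obtain ⟨i, hi⟩ := hα
  set t : ℕ := (∑ i : Fin 4, cnt (α i)) + ∑ k : Fin 8, cnt (w k) with ht_def
  set e : ℕ := ∑ p ∈ Finset.univ.filter (fun p : Fin 4 × Fin 4 => p.1 < p.2),
      g (α p.1) (α p.2) with he_def
  have hPt : (∏ i : Fin 4, (1 - C (α i) ^ 2 * X ^ 2))
      * (∏ k : Fin 8, (1 - C (w k) ^ 2 * X ^ 2))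
      = (1 - X ^ 2 : (ZMod 3)[X]) ^ t := by
    simp_rw [factor1, Finset.prod_pow_eq_pow_sum, ← pow_add]
    rfl
  have hQe : (∏ p ∈ Finset.univ.filter (fun p : Fin 4 × Fin 4 => p.1 < p.2),
      (1 - C (2 * ((α p.1) ^ 2 + (α p.2) ^ 2)) * X ^ 2
        + C (((α p.1) ^ 2 - (α p.2) ^ 2) ^ 2) * X ^ 4))
      = (1 - X ^ 2 : (ZMod 3)[X]) ^ e := by
    simp_rw [factor2, Finset.prod_pow_eq_pow_sum]
    rfl
  have ht1 : 1 ≤ t := by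
    have h1 : cnt (α i) ≤ ∑ i : Fin 4, cnt (α i) :=
      Finset.single_le_sum (f := fun j => cnt (α j)) (fun _ _ => Nat.zero_le _) (Finset.mem_univ i)
    have h2 : cnt (α i) = 1 := by simp [cnt, hi]
    omega
  have he1 : 1 ≤ e := by
    rcases eq_or_ne i 0 with hi0 | hi0
    · have hmem : ((0, 1) : Fin 4 × Fin 4) ∈
          Finset.univ.filter (fun p : Fin 4 × Fin 4 => p.1 < p.2) := by decide
      have h1 : g (α 0) (α 1) ≤ e :=
        Finset.single_le_sum (f := fun p : Fin 4 × Fin 4 => g (α p.1) (α p.2))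
          (fun _ _ => Nat.zero_le _) hmem
      have h2 : 1 ≤ g (α 0) (α 1) := g_pos_left _ _ (hi0 ▸ hi)
      omega
    · have hmem : ((0, i) : Fin 4 × Fin 4) ∈
          Finset.univ.filter (fun p : Fin 4 × Fin 4 => p.1 < p.2) := by
        simp [Fin.pos_of_ne_zero hi0]
      have h1 : g (α 0) (α i) ≤ e :=
        Finset.single_le_sum (f := fun p : Fin 4 × Fin 4 => g (α p.1) (α p.2))
          (fun _ _ => Nat.zero_le _) hmem
      have h2 : 1 ≤ g (α 0) (α i) := g_pos_right _ _ hi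
      omega
  have ht9 : t = 9 := exponent_eq_nine t ht1 a (hPt ▸ hP)
  have he9 : e = 9 := exponent_eq_nine e he1 b (hQe ▸ hQ)
  rw [hPt, hQe, ht9, he9, ← pow_mul, ← pow_add]
  exact pow_eighty_one
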